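/- Let K ⊆ L be number fields with L a finite extension of K of degree n = [L : K], and let J be a nonzero ideal of the ring of integers O_K. If the extended ideal J·O_L is a principal ideal of O_L, then J^n is a principal ideal of O_K. -/

import Mathlib

open NumberField

section Aux

open UniqueFactorizationMonoid

set_option synthInstance.maxHeartbeats 1000000
set_option maxHeartbeats 1000000

-- Sublemma C
lemma aux_eq_of_le_absNorm {R : Type*} [CommRing R] [IsDedekindDomain R] [Infinite R]
    [Module.Free ℤ R] [Module.Finite ℤ R] {I I' : Ideal R} (hle : I ≤ I')
    (habs : Ideal.absNorm I = Ideal.absNorm I') (h0 : Ideal.absNorm I' ≠ 0) : I = I' := by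
  obtain ⟨C, hC⟩ := Ideal.dvd_iff_le.mpr hle
  have h1 : Ideal.absNorm I' * Ideal.absNorm C = Ideal.absNorm I' * 1 := by
    rw [mul_one, ← map_mul, ← hC, habs]
  have : Ideal.absNorm C = 1 := Nat.eq_of_mul_eq_mul_left (Nat.pos_of_ne_zero h0) h1
  rw [hC, Ideal.absNorm_eq_one_iff.mp this, Ideal.mul_top]

-- Sublemma A'
lemma aux_pow_le {R : Type*} [CommRing R] [IsDedekindDomain R] {J I : Ideal R} {n : ℕ}
    (hn : 0 < n) (hJ : J ≠ ⊥) (hmem : ∀ a ∈ J, a ^ n ∈ I) : J ^ n ≤ I := by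
  classical
  obtain ⟨a0, ha0J, ha0⟩ := Submodule.exists_mem_ne_zero_of_ne_bot hJ
  have hI : I ≠ ⊥ := fun hbot => pow_ne_zero n ha0 (by simpa [hbot] using hmem a0 ha0J)
  rw [← Ideal.dvd_iff_le,
    dvd_iff_normalizedFactors_le_normalizedFactors hI (pow_ne_zero n hJ),
    Multiset.le_iff_count]
  intro P
  by_cases hP : P ∈ normalizedFactors I
  swap
  · simp [Multiset.count_eq_zero_of_notMem hP]
  have hPprime : Prime P := prime_of_normalized_factor P hP
  set v := Multiset.count P (normalizedFactors J) with hv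
  have hnfP : ∀ k : ℕ, normalizedFactors (P ^ k) = Multiset.replicate k P := by
    intro k
    rw [normalizedFactors_pow, normalizedFactors_irreducible hPprime.irreducible,
      normalize_eq]
    exact Multiset.nsmul_singleton P k
  -- J is not contained in P ^ (v+1)
  have hJP : ¬ J ≤ P ^ (v + 1) := by
    intro hle
    have := count_le_of_ideal_ge hle hJ P
    rw [hnfP, Multiset.count_replicate_self] at this
    omega
  obtain ⟨a, haJ, haP⟩ := SetLike.not_le_iff_exists.mp hJP
  have ha : a ≠ 0 := fun h => haP (h ▸ zero_mem _)
  have hspan : Ideal.span {a} ≠ ⊥ := by simpa [Ideal.span_singleton_eq_bot] using ha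
  have hcount : Multiset.count P (normalizedFactors (Ideal.span {a})) ≤ v := by
    by_contra hlt
    push_neg at hlt
    apply haP
    have hrep : Multiset.replicate (v + 1) P ≤ normalizedFactors (Ideal.span {a}) :=
      Multiset.le_count_iff_replicate_le.mp hlt
    have : P ^ (v + 1) ∣ Ideal.span {a} :=
      (dvd_iff_normalizedFactors_le_normalizedFactors (pow_ne_zero _ hPprime.ne_zero)
        hspan).mpr (by rw [hnfP]; exact hrep)
    exact (Ideal.span_singleton_le_iff_mem _).mp (Ideal.le_of_dvd this)
  have hkey : Multiset.count P (normalizedFactors I)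
      ≤ Multiset.count P (normalizedFactors (Ideal.span {a ^ n})) := by
    refine count_le_of_ideal_ge ((Ideal.span_singleton_le_iff_mem _).mpr (hmem a haJ)) ?_ P
    simpa [Ideal.span_singleton_eq_bot] using pow_ne_zero n ha
  rw [← Ideal.span_singleton_pow, normalizedFactors_pow, Multiset.count_nsmul] at hkey
  rw [normalizedFactors_pow, Multiset.count_nsmul]
  calc Multiset.count P (normalizedFactors I)
      ≤ n * Multiset.count P (normalizedFactors (Ideal.span {a})) := hkey
    _ ≤ n * v := Nat.mul_le_mul_left n hcount

variable (K L : Type*) [Field K] [Field L] [NumberField K] [NumberField L]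
    [Algebra K L] [FiniteDimensional K L]

lemma aux_absNorm_map_prime (p : Ideal (𝓞 K)) (hp : Prime p) :
    Ideal.absNorm (p.map (algebraMap (𝓞 K) (𝓞 L))) = Ideal.absNorm p ^ Module.finrank K L := by
  classical
  have hp0 : p ≠ ⊥ := hp.ne_zero
  haveI hpP : p.IsPrime := Ideal.isPrime_of_prime hp
  haveI : p.IsMaximal := Ideal.IsPrime.isMaximal hpP hp0
  letI M : Module ((𝓞 K) ⧸ p) ((𝓞 L) ⧸ p.map (algebraMap (𝓞 K) (𝓞 L))) := inferInstance
  have hinj : Function.Injective (algebraMap (𝓞 K) (𝓞 L)) :=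
    FaithfulSMul.algebraMap_injective _ _
  have hmap0 : p.map (algebraMap (𝓞 K) (𝓞 L)) ≠ ⊥ := by
    rw [Ne, Ideal.map_eq_bot_iff_of_injective hinj]
    exact hp0
  haveI : Finite ((𝓞 K) ⧸ p) :=
    (Ideal.absNorm_ne_zero_iff p).mp (by rwa [Ne, Ideal.absNorm_eq_zero_iff])
  haveI : Finite ((𝓞 L) ⧸ p.map (algebraMap (𝓞 K) (𝓞 L))) :=
    (Ideal.absNorm_ne_zero_iff _).mp (by rwa [Ne, Ideal.absNorm_eq_zero_iff])
  letI : Fintype ((𝓞 K) ⧸ p) := Fintype.ofFinite _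
  letI : Fintype ((𝓞 L) ⧸ p.map (algebraMap (𝓞 K) (𝓞 L))) := Fintype.ofFinite _
  letI F : Field ((𝓞 K) ⧸ p) := Ideal.Quotient.field p
  have hcard := @Module.card_eq_pow_finrank ((𝓞 K) ⧸ p) ((𝓞 L) ⧸ p.map (algebraMap (𝓞 K) (𝓞 L)))
    F.toDivisionRing _ M _ _
  rw [Ideal.finrank_quotient_map p K L] at hcard
  rw [Ideal.absNorm_apply, Ideal.absNorm_apply, Submodule.cardQuot_apply,
    Submodule.cardQuot_apply, Nat.card_eq_fintype_card, Nat.card_eq_fintype_card, hcard]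

lemma aux_absNorm_map (J : Ideal (𝓞 K)) (hJ : J ≠ ⊥) :
    Ideal.absNorm (J.map (algebraMap (𝓞 K) (𝓞 L))) = Ideal.absNorm J ^ Module.finrank K L := by
  induction J using UniqueFactorizationMonoid.induction_on_prime with
  | h₁ => exact absurd rfl hJ
  | h₂ I hI =>
      rw [Ideal.isUnit_iff.mp hI, Ideal.map_top, Ideal.absNorm_top]; rw [Ideal.absNorm_top, one_pow]
  | h₃ I p hI hp ih =>
      have hI' : I ≠ ⊥ := fun h => hI (by simpa [h] using hI)
      rw [Ideal.map_mul, map_mul, map_mul, aux_absNorm_map_prime K L p hp, ih hI', mul_pow]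

lemma aux_norm_trans (x : 𝓞 L) :
    Algebra.norm ℤ (RingOfIntegers.norm K x) = Algebra.norm ℤ x := by
  have : ((Algebra.norm ℤ (RingOfIntegers.norm K x) : ℤ) : ℚ)
      = ((Algebra.norm ℤ x : ℤ) : ℚ) := by
    rw [Algebra.coe_norm_int, Algebra.coe_norm_int, RingOfIntegers.coe_norm,
      Algebra.norm_norm]
  exact_mod_cast this

end Aux

set_option synthInstance.maxHeartbeats 1000000 in
set_option maxHeartbeats 1000000 in
/-- If `K ⊆ L` are number fields with `L` finite over `K` of degree `n = [L : K]`,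
and `J` is a nonzero ideal of `𝓞 K` whose extension `J · 𝓞 L` is principal, then
`J ^ n` is a principal ideal of `𝓞 K`. -/
theorem stmt_2 (K L : Type*) [Field K] [Field L] [NumberField K] [NumberField L]
    [Algebra K L] [FiniteDimensional K L] (J : Ideal (𝓞 K)) (hJ : J ≠ ⊥)
    (h : (J.map (algebraMap (𝓞 K) (𝓞 L))).IsPrincipal) :
    (J ^ Module.finrank K L).IsPrincipal := by
  classical
  set n := Module.finrank K L with hn
  have hnpos : 0 < n := Module.finrank_pos
  obtain ⟨x, hx⟩ := h
  have hinj : Function.Injective (algebraMap (𝓞 K) (𝓞 L)) :=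
    FaithfulSMul.algebraMap_injective _ _
  have hmap0 : J.map (algebraMap (𝓞 K) (𝓞 L)) ≠ ⊥ := by
    rw [Ne, Ideal.map_eq_bot_iff_of_injective hinj]; exact hJ
  have hx0 : x ≠ 0 := by
    rintro rfl
    rw [hx] at hmap0
    simp at hmap0
  set g : 𝓞 K := RingOfIntegers.norm K x with hg
  -- every `n`-th power of an element of `J` lies in `span {g}`
  have hmem : ∀ a ∈ J, a ^ n ∈ Ideal.span {g} := by
    intro a ha
    have h1 : algebraMap (𝓞 K) (𝓞 L) a ∈ J.map (algebraMap (𝓞 K) (𝓞 L)) :=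
      Ideal.mem_map_of_mem _ ha
    rw [hx, Ideal.submodule_span_eq, Ideal.mem_span_singleton] at h1
    have h2 : g ∣ RingOfIntegers.norm K (algebraMap (𝓞 K) (𝓞 L) a) :=
      map_dvd (RingOfIntegers.norm K) h1
    rw [RingOfIntegers.norm_algebraMap, ← hn] at h2
    exact Ideal.mem_span_singleton.mpr h2
  have hle : J ^ n ≤ Ideal.span {g} := aux_pow_le hnpos hJ hmem
  -- the absolute norms agree
  have habs : Ideal.absNorm (J ^ n) = Ideal.absNorm (Ideal.span {g}) := by
    rw [map_pow, Ideal.absNorm_span_singleton, hg, aux_norm_trans,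
      ← Ideal.absNorm_span_singleton, ← Ideal.submodule_span_eq, ← hx,
      aux_absNorm_map K L J hJ, hn]
  have h0 : Ideal.absNorm (Ideal.span {g}) ≠ 0 := by
    rw [← habs, Ne, Ideal.absNorm_eq_zero_iff]
    exact pow_ne_zero n hJ
  exact ⟨g, aux_eq_of_le_absNorm hle habs h0⟩
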